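/- Let 𝒞 = (C, Q, 𝒯) be a counter system whose steps are exactly the disjunctive-guard steps induced by a finite set of disjunctive-guard transitions. Then every pair ((c,v),(c',v')) ∈ 𝒯 that is minimal in 𝒯 with respect to the product order ≼₀ × ≼₀ satisfies v(q) ≤ 2 for all q ∈ Q. (A pair t ∈ 𝒯 is minimal if every t' ∈ 𝒯 with t' ≼₀ × ≼₀ t equals t.) -/
import Mathlib


namespace CS01

variable {C Q A : Type*}

/-- Configurations of a counter system: a controller state and a counter vector. -/
abbrev Conf (C Q : Type*) := C × (Q → ℕ)

/-- The order `≼₀`: same controller state, pointwise smaller counters,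
and the same zero pattern. -/
def Le0 (x y : Conf C Q) : Prop :=
  x.1 = y.1 ∧ (∀ q, x.2 q ≤ y.2 q) ∧ ∀ q, (x.2 q = 0 ↔ y.2 q = 0)

/-- The product order `≼₀ × ≼₀` on pairs of configurations. -/
def ProdLe0 (s t : Conf C Q × Conf C Q) : Prop :=
  Le0 s.1 t.1 ∧ Le0 s.2 t.2

/-- The abstraction `α`, mapping a configuration to its 01-abstraction. -/
def alpha (x : Conf C Q) : Conf C Q :=
  (x.1, fun q => if x.2 q = 0 then 0 else 1)

/-- Forward `≼₀`-compatibility of a step relation. -/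
def FwdCompat (T : Set (Conf C Q × Conf C Q)) : Prop :=
  ∀ x y d, (x, y) ∈ T → Le0 x d → ∃ d', (d, d') ∈ T ∧ Le0 y d'

/-- Backward `≼₀`-compatibility of a step relation. -/
def BwdCompat (T : Set (Conf C Q × Conf C Q)) : Prop :=
  ∀ x y d', (x, y) ∈ T → Le0 y d' → ∃ d, (d, d') ∈ T ∧ Le0 x d

/-- Steps of a counter system are size-preserving. -/
def SizePreserving [Fintype Q] (T : Set (Conf C Q × Conf C Q)) : Prop :=
  ∀ t ∈ T, ∑ q, t.1.2 q = ∑ q, t.2.2 q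

/-- A step of the 01-counter system `𝒞_α`. -/
def AbsStep (T : Set (Conf C Q × Conf C Q)) (x' y' : Conf C Q) : Prop :=
  ∃ t ∈ T, alpha t.1 = x' ∧ alpha t.2 = y'

/-- A finite run of the counter system, starting in an initial configuration. -/
def IsRun (T : Set (Conf C Q × Conf C Q)) (c0 : C) (Q0 : Set Q)
    {n : ℕ} (ρ : Fin (n + 1) → Conf C Q) : Prop :=
  (ρ 0).1 = c0 ∧ (∀ q ∉ Q0, (ρ 0).2 q = 0) ∧
    ∀ i : Fin n, (ρ i.castSucc, ρ i.succ) ∈ T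

/-- A finite run of the 01-counter system, starting in an initial (0/1-valued)
abstract configuration. -/
def IsAbsRun (T : Set (Conf C Q × Conf C Q)) (c0 : C) (Q0 : Set Q)
    {n : ℕ} (σ : Fin (n + 1) → Conf C Q) : Prop :=
  (σ 0).1 = c0 ∧ (∀ q, (σ 0).2 q ≤ 1) ∧ (∀ q ∉ Q0, (σ 0).2 q = 0) ∧
    ∀ i : Fin n, AbsStep T (σ i.castSucc) (σ i.succ)

/-- Reachability in the counter system. -/
def Reach (T : Set (Conf C Q × Conf C Q)) (c0 : C) (Q0 : Set Q)
    (x : Conf C Q) : Prop :=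
  ∃ (n : ℕ) (ρ : Fin (n + 1) → Conf C Q), IsRun T c0 Q0 ρ ∧ ρ (Fin.last n) = x

/-- Reachability in the 01-counter system. -/
def AbsReach (T : Set (Conf C Q × Conf C Q)) (c0 : C) (Q0 : Set Q)
    (x : Conf C Q) : Prop :=
  ∃ (n : ℕ) (σ : Fin (n + 1) → Conf C Q), IsAbsRun T c0 Q0 σ ∧ σ (Fin.last n) = x

/-- The counter vector obtained when `i` processes move from `p` to `p'`. -/
def moveN [DecidableEq Q] (v : Q → ℕ) (p p' : Q) (i : ℕ) : Q → ℕ :=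
  fun q => v q - (if q = p then i else 0) + (if q = p' then i else 0)

/-- A configuration satisfies a disjunctive guard `G ⊆ C ⊕ Q`. -/
def SatG (x : Conf C Q) (G : Set (C ⊕ Q)) : Prop :=
  Sum.inl x.1 ∈ G ∨ ∃ q, Sum.inr q ∈ G ∧ 1 ≤ x.2 q

/-- A disjunctive-guard step induced by controller transitions `ΔC` and user
transitions `ΔQ`: either the controller takes a guarded transition, or `i ≥ 1`
user processes take the same guarded transition; the guard must be satisfied
in the source and in the target configuration. -/
def DGStep [DecidableEq Q] (ΔC : Set (C × Set (C ⊕ Q) × C))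
    (ΔQ : Set (Q × Set (C ⊕ Q) × Q)) (x y : Conf C Q) : Prop :=
  (∃ G, (x.1, G, y.1) ∈ ΔC ∧ y.2 = x.2 ∧ SatG x G ∧ SatG y G) ∨
  (∃ p G p' i, 1 ≤ i ∧ (p, G, p') ∈ ΔQ ∧ y.1 = x.1 ∧ i ≤ x.2 p ∧
    y.2 = moveN x.2 p p' i ∧ SatG x G ∧ SatG y G)


lemma satg_transfer {C Q : Type*} {c : C} {u w : Q → ℕ} {G : Set (C ⊕ Q)}
    (h : SatG (c, u) G) (hz : ∀ r, 1 ≤ u r → 1 ≤ w r) : SatG (c, w) G := by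
  rcases h with h | ⟨r, hr, h1⟩
  · exact Or.inl h
  · exact Or.inr ⟨r, hr, hz r h1⟩

/-- In a counter system whose steps are exactly the
disjunctive-guard steps, every pair of `𝒯` that is minimal with respect to
`≼₀ × ≼₀` has at most `2` processes in each user state of its source
configuration. -/
theorem stmt18 [Fintype C] [Fintype Q] [Nonempty C] [Nonempty Q] [DecidableEq Q]
    (ΔC : Set (C × Set (C ⊕ Q) × C)) (ΔQ : Set (Q × Set (C ⊕ Q) × Q))
    (T : Set (Conf C Q × Conf C Q))
    (hT : ∀ x y : Conf C Q, (x, y) ∈ T ↔ DGStep ΔC ΔQ x y)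
    (t : Conf C Q × Conf C Q) (ht : t ∈ T)
    (hmin : ∀ t' ∈ T, ProdLe0 t' t → t' = t) :
    ∀ q, t.1.2 q ≤ 2 := by
  obtain ⟨⟨c1, v⟩, ⟨c2, w⟩⟩ := t
  intro q
  by_contra hq
  push_neg at hq
  have hq' : 2 < v q := hq
  obtain ⟨v', hv'min⟩ : ∃ v' : Q → ℕ, ∀ r, v' r = min (v r) 2 :=
    ⟨fun r => min (v r) 2, fun r => rfl⟩
  have hv'le : ∀ r, v' r ≤ v r := by intro r; have := hv'min r; omega
  have hv'z : ∀ r, (v' r = 0 ↔ v r = 0) := by intro r; have := hv'min r; omega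
  have hv'pos : ∀ r, 1 ≤ v r → 1 ≤ v' r := by intro r; have := hv'min r; omega
  have hne : v' ≠ v := by
    intro h
    have h1 := congrFun h q
    have h2 := hv'min q
    omega
  have hstep := (hT (c1, v) (c2, w)).mp ht
  rcases hstep with ⟨G, hG, hwv, hsx, hsy⟩ | ⟨p, G, p', i, hi1, hΔ, hy1, hip, hy2, hsx, hsy⟩
  · -- controller step
    have hwv' : w = v := hwv
    have hmem : ((c1, v'), (c2, v')) ∈ T := by
      rw [hT]
      left
      refine ⟨G, hG, rfl, satg_transfer hsx hv'pos, ?_⟩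
      have h1 : SatG (c2, v) G := by rwa [hwv'] at hsy
      exact satg_transfer h1 hv'pos
    have heq := hmin _ hmem
      ⟨⟨rfl, hv'le, hv'z⟩, ⟨rfl, by rw [hwv']; exact hv'le, by rw [hwv']; exact hv'z⟩⟩
    exact hne (congrArg (fun t => t.1.2) heq)
  · -- user step
    have hip' : i ≤ v p := hip
    have hy1' : c2 = c1 := hy1
    have hy2' : w = moveN v p p' i := hy2
    obtain ⟨i', hi'c⟩ : ∃ i', (i = v p ∧ i' = min i 2) ∨ (i ≠ v p ∧ i' = 1) := by
      by_cases h : i = v p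
      · exact ⟨min i 2, Or.inl ⟨h, rfl⟩⟩
      · exact ⟨1, Or.inr ⟨h, rfl⟩⟩
    have hi'1 : 1 ≤ i' := by rcases hi'c with ⟨h, h2⟩ | ⟨h, h2⟩ <;> omega
    have hi'p : i' ≤ v' p := by
      have e2 := hv'min p
      rcases hi'c with ⟨h, h2⟩ | ⟨h, h2⟩ <;> omega
    have key : ∀ r, moveN v' p p' i' r ≤ moveN v p p' i r ∧
        (moveN v' p p' i' r = 0 ↔ moveN v p p' i r = 0) := by
      intro r
      have e2 := hv'min p
      have e1 := hv'min r
      rcases eq_or_ne r p with rfl | hrp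
      · rcases eq_or_ne r p' with rfl | hrp'
        · simp only [moveN]
          split_ifs with h1
          · rcases hi'c with ⟨h, h2⟩ | ⟨h, h2⟩ <;> omega
          · exact absurd trivial h1
        · simp only [moveN, if_neg hrp']
          split_ifs with h1
          · rcases hi'c with ⟨h, h2⟩ | ⟨h, h2⟩ <;> omega
          · exact absurd trivial h1
      · rcases eq_or_ne r p' with rfl | hrp'
        · simp only [moveN, if_neg hrp]
          split_ifs with h1
          · rcases hi'c with ⟨h, h2⟩ | ⟨h, h2⟩ <;> omega
          · exact absurd trivial h1
        · simp only [moveN, if_neg hrp, if_neg hrp']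
          rcases hi'c with ⟨h, h2⟩ | ⟨h, h2⟩ <;> omega
    have hmem : ((c1, v'), (c1, moveN v' p p' i')) ∈ T := by
      rw [hT]
      right
      refine ⟨p, G, p', i', hi'1, hΔ, rfl, hi'p, rfl, satg_transfer hsx hv'pos, ?_⟩
      have hsy' : SatG (c1, moveN v p p' i) G := by
        rw [hy1', hy2'] at hsy
        exact hsy
      exact satg_transfer hsy' (fun r h => by have := key r; omega)
    have heq := hmin _ hmem
      ⟨⟨rfl, hv'le, hv'z⟩,
       ⟨hy1'.symm, by rw [hy2']; exact fun r => (key r).1,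
        by rw [hy2']; exact fun r => (key r).2⟩⟩
    exact hne (congrArg (fun t => t.1.2) heq)

end CS01
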